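/- Let G be a finite simple graph with oriented edges and triangles, and H = B·Bᵀ + Cᵀ·C its Helmholtzian matrix. If distinct edges e and e' share an endpoint and lie in a common triangle, then H_{e,e'} = 0. -/

import Mathlib

open Matrix

/-- A finite simple graph together with arbitrary orientations on its edges
(indexed by `E`, each with a tail and a head) and on its triangles
(indexed by `T`, each given as a cyclic triple of vertices). -/
structure GraphData (V E T : Type*) where
  G : SimpleGraph V
  tail : E → V
  head : E → V
  tri1 : T → V
  tri2 : T → V
  tri3 : T → V
  edge_adj : ∀ e, G.Adj (tail e) (head e)
  edge_inj : ∀ e e' : E, s(tail e, head e) = s(tail e', head e') → e = e'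
  edge_surj : ∀ a b, G.Adj a b → ∃ e, s(tail e, head e) = s(a, b)
  tri_adj12 : ∀ τ, G.Adj (tri1 τ) (tri2 τ)
  tri_adj23 : ∀ τ, G.Adj (tri2 τ) (tri3 τ)
  tri_adj31 : ∀ τ, G.Adj (tri3 τ) (tri1 τ)
  tri_inj : ∀ τ τ' : T, ({tri1 τ, tri2 τ, tri3 τ} : Set V) = {tri1 τ', tri2 τ', tri3 τ'} → τ = τ'
  tri_surj : ∀ a b c, G.Adj a b → G.Adj b c → G.Adj c a →
    ∃ τ, ({tri1 τ, tri2 τ, tri3 τ} : Set V) = {a, b, c}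

variable {V E T : Type*}

/-- The signed edge-vertex incidence matrix `B`. -/
def Bmat [DecidableEq V] (D : GraphData V E T) : Matrix E V ℝ := fun e v =>
  if v = D.head e then 1 else if v = D.tail e then -1 else 0

/-- The signed triangle-edge incidence matrix `C`. -/
def Cmat [DecidableEq V] (D : GraphData V E T) : Matrix T E ℝ := fun τ e =>
  if (D.tail e, D.head e) = (D.tri1 τ, D.tri2 τ) ∨ (D.tail e, D.head e) = (D.tri2 τ, D.tri3 τ) ∨
      (D.tail e, D.head e) = (D.tri3 τ, D.tri1 τ) then 1
  else if (D.head e, D.tail e) = (D.tri1 τ, D.tri2 τ) ∨ (D.head e, D.tail e) = (D.tri2 τ, D.tri3 τ) ∨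
      (D.head e, D.tail e) = (D.tri3 τ, D.tri1 τ) then -1
  else 0

/-- The Helmholtzian matrix `H = B * Bᵀ + Cᵀ * C`. -/
def Hmat [DecidableEq V] [Fintype V] [Fintype T] (D : GraphData V E T) : Matrix E E ℝ :=
  Bmat D * (Bmat D)ᵀ + (Cmat D)ᵀ * Cmat D

/-- The nullity of the Helmholtzian matrix, i.e. the dimension of its kernel. -/
noncomputable def nullity [DecidableEq V] [Fintype V] [Fintype T] [Fintype E]
    (D : GraphData V E T) : ℕ :=
  Module.finrank ℝ ↥(LinearMap.ker (Hmat D).mulVecLin)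

/-- The edge `e` lies in the triangle `τ`. -/
def edgeInTri (D : GraphData V E T) (e : E) (τ : T) : Prop :=
  D.tail e ∈ ({D.tri1 τ, D.tri2 τ, D.tri3 τ} : Set V) ∧
  D.head e ∈ ({D.tri1 τ, D.tri2 τ, D.tri3 τ} : Set V)

/-- The triangle degree of an edge: the number of triangles containing it. -/
def triDeg [DecidableEq V] [Fintype T] (D : GraphData V E T) (e : E) : ℕ :=
  (Finset.univ.filter fun τ =>
    D.tail e ∈ ({D.tri1 τ, D.tri2 τ, D.tri3 τ} : Finset V) ∧
    D.head e ∈ ({D.tri1 τ, D.tri2 τ, D.tri3 τ} : Finset V)).card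

lemma sum_B [DecidableEq V] [Fintype V] (D : GraphData V E T) (e : E) (f : V → ℝ) :
    ∑ v, Bmat D e v * f v = f (D.head e) - f (D.tail e) := by
  have hth : D.tail e ≠ D.head e := (D.edge_adj e).ne
  have key : ∀ v, Bmat D e v * f v =
      (if v = D.head e then f (D.head e) else 0) +
      (if v = D.tail e then -f (D.tail e) else 0) := by
    intro v
    simp only [Bmat]
    split_ifs with h1 h2 <;> simp_all
  rw [Finset.sum_congr rfl fun v _ => key v, Finset.sum_add_distrib]
  simp [sub_eq_add_neg]

lemma edgeInTri_of_C_ne [DecidableEq V] (D : GraphData V E T) (τ : T) (e : E)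
    (h : Cmat D τ e ≠ 0) : edgeInTri D e τ := by
  unfold Cmat at h
  split_ifs at h with h1 h2
  · rcases h1 with h1|h1|h1 <;> simp only [Prod.mk.injEq] at h1 <;>
      exact ⟨by simp [h1.1], by simp [h1.2]⟩
  · rcases h2 with h2|h2|h2 <;> simp only [Prod.mk.injEq] at h2 <;>
      exact ⟨by simp [h2.2], by simp [h2.1]⟩
  · exact absurd rfl h

lemma subset_tri [DecidableEq V] (D : GraphData V E T) (σ τ : T)
    (h : ({D.tri1 τ, D.tri2 τ, D.tri3 τ} : Set V) ⊆ {D.tri1 σ, D.tri2 σ, D.tri3 σ}) :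
    σ = τ := by
  apply D.tri_inj
  have h12 : D.tri1 τ ≠ D.tri2 τ := (D.tri_adj12 τ).ne
  have h23 : D.tri2 τ ≠ D.tri3 τ := (D.tri_adj23 τ).ne
  have h31 : D.tri3 τ ≠ D.tri1 τ := (D.tri_adj31 τ).ne
  have hF : ({D.tri1 τ, D.tri2 τ, D.tri3 τ} : Finset V) ⊆ {D.tri1 σ, D.tri2 σ, D.tri3 σ} := by
    intro x hx
    simp only [Finset.mem_insert, Finset.mem_singleton] at hx ⊢
    have := h (show x ∈ ({D.tri1 τ, D.tri2 τ, D.tri3 τ} : Set V) by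
      simpa [Set.mem_insert_iff] using hx)
    simpa [Set.mem_insert_iff] using this
  have hcardτ : ({D.tri1 τ, D.tri2 τ, D.tri3 τ} : Finset V).card = 3 := by
    rw [Finset.card_insert_of_notMem (by simp [h12, Ne.symm h31]),
        Finset.card_insert_of_notMem (by simp [h23]), Finset.card_singleton]
  have hcardσ : ({D.tri1 σ, D.tri2 σ, D.tri3 σ} : Finset V).card ≤ 3 := by
    apply le_trans (Finset.card_insert_le _ _)
    simp [Finset.card_insert_le]
    have := Finset.card_le_two (a := D.tri2 σ) (b := D.tri3 σ)
    omega
  have hEq : ({D.tri1 τ, D.tri2 τ, D.tri3 τ} : Finset V)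
      = {D.tri1 σ, D.tri2 σ, D.tri3 σ} :=
    Finset.eq_of_subset_of_card_le hF (by omega)
  have := congrArg (fun (s : Finset V) => (s : Set V)) hEq
  simpa using this.symm

lemma tri_cover [DecidableEq V] (D : GraphData V E T) (e e' : E) (τ : T)
    (hne : e ≠ e') (h1 : edgeInTri D e τ) (h2 : edgeInTri D e' τ) :
    ({D.tri1 τ, D.tri2 τ, D.tri3 τ} : Set V)
      ⊆ {D.tail e, D.head e, D.tail e', D.head e'} := by
  have hth : D.tail e ≠ D.head e := (D.edge_adj e).ne
  have hth' : D.tail e' ≠ D.head e' := (D.edge_adj e').ne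
  obtain ⟨he1, he2⟩ := h1
  obtain ⟨he1', he2'⟩ := h2
  simp only [Set.mem_insert_iff, Set.mem_singleton_iff] at he1 he2 he1' he2'
  intro x hx
  simp only [Set.mem_insert_iff, Set.mem_singleton_iff] at hx ⊢
  rcases he1 with h|h|h <;> rcases he2 with h'|h'|h' <;>
    rcases he1' with g|g|g <;> rcases he2' with g'|g'|g' <;>
  first
  | exact absurd (h.trans h'.symm) hth
  | exact absurd (g.trans g'.symm) hth'
  | (refine absurd (D.edge_inj e e' ?_) hne; rw [h, h', g, g']; done)
  | (refine absurd (D.edge_inj e e' ?_) hne; rw [h, h', g, g']; exact Sym2.eq_swap)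
  | (rw [h, h', g, g']; tauto)

lemma tri_unique [DecidableEq V] (D : GraphData V E T) (e e' : E) (τ σ : T)
    (hne : e ≠ e') (h1 : edgeInTri D e τ) (h2 : edgeInTri D e' τ)
    (h3 : edgeInTri D e σ) (h4 : edgeInTri D e' σ) : σ = τ := by
  refine subset_tri D σ τ fun x hx => ?_
  rcases tri_cover D e e' τ hne h1 h2 hx with h|h|h|h <;> subst h
  · exact h3.1
  · exact h3.2
  · exact h4.1
  · exact h4.2

theorem helmholtzian_adjacent_common_triangle [DecidableEq V] [Fintype V] [Fintype E] [Fintype T]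
    (D : GraphData V E T) (e e' : E) (hne : e ≠ e')
    (hshare : (({D.tail e, D.head e} : Set V) ∩ {D.tail e', D.head e'}).Nonempty)
    (htri : ∃ τ, edgeInTri D e τ ∧ edgeInTri D e' τ) :
    Hmat D e e' = 0 := by
  obtain ⟨τ, hE, hE'⟩ := htri
  have hth : D.tail e ≠ D.head e := (D.edge_adj e).ne
  have hth' : D.tail e' ≠ D.head e' := (D.edge_adj e').ne
  have h12 : D.tri1 τ ≠ D.tri2 τ := (D.tri_adj12 τ).ne
  have h23 : D.tri2 τ ≠ D.tri3 τ := (D.tri_adj23 τ).ne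
  have h31 : D.tri3 τ ≠ D.tri1 τ := (D.tri_adj31 τ).ne
  have hBB : (Bmat D * (Bmat D)ᵀ) e e' = Bmat D e' (D.head e) - Bmat D e' (D.tail e) := by
    rw [Matrix.mul_apply]
    simpa [Matrix.transpose_apply] using sum_B D e (fun v => Bmat D e' v)
  have hCC : ((Cmat D)ᵀ * Cmat D) e e' = Cmat D τ e * Cmat D τ e' := by
    rw [Matrix.mul_apply]
    simp only [Matrix.transpose_apply]
    refine Finset.sum_eq_single τ (fun σ _ hστ => ?_) (by simp)
    by_contra h
    obtain ⟨hc1, hc2⟩ := mul_ne_zero_iff.mp h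
    exact hστ (tri_unique D e e' τ σ hne hE hE'
      (edgeInTri_of_C_ne D σ e hc1) (edgeInTri_of_C_ne D σ e' hc2))
  rw [Hmat, Matrix.add_apply, hBB, hCC]
  obtain ⟨he1, he2⟩ := hE
  obtain ⟨he1', he2'⟩ := hE'
  simp only [Set.mem_insert_iff, Set.mem_singleton_iff] at he1 he2 he1' he2'
  rcases he1 with h|h|h <;> rcases he2 with h'|h'|h' <;>
    rcases he1' with g|g|g <;> rcases he2' with g'|g'|g' <;>
  first
  | exact absurd (h.trans h'.symm) hth
  | exact absurd (g.trans g'.symm) hth'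
  | (refine absurd (D.edge_inj e e' ?_) hne; rw [h, h', g, g']; done)
  | (refine absurd (D.edge_inj e e' ?_) hne; rw [h, h', g, g']; exact Sym2.eq_swap)
  | (simp [Bmat, Cmat, h, h', g, g', Prod.ext_iff, h12, h23, h31,
      Ne.symm h12, Ne.symm h23, Ne.symm h31]; try norm_num)
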